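/- arXiv:0801.3444 — 2 statements merged into one kernel-verified Lean document; each statement's English description precedes it below -/
import Mathlib

section
/- Let a, b ≥ 0 and let g : (0, 1/2] → [0,∞) be a function such that sup_{r ∈ (1/4, 1/2]} g(r) < ∞ and such that g(ε) ≤ ( g(ε√2)² + b·g(ε√2) )^{1/2} + a for every ε ∈ (0, 2^{−3/2}]. Then there exists a constant K such that g(ε) ≤ K log(1/ε) for all ε ∈ (0, 1/2]. -/
open Real Set

noncomputable section

/-- the recursion argument in the proof of Proposition 2.1 for `d ≥ 3`.
If `g : (0,1/2] → [0,∞)` is bounded on `(1/4,1/2]` and satisfies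
`g(ε) ≤ (g(ε√2)² + b g(ε√2))^{1/2} + a` for all `ε ∈ (0, 2^{-3/2}]`, then there is a
constant `K` such that `g(ε) ≤ K log(1/ε)` on `(0,1/2]`. -/
theorem recursion_log_bound (a b : ℝ) (ha : 0 ≤ a) (hb : 0 ≤ b) (g : ℝ → ℝ)
    (hg0 : ∀ r ∈ Set.Ioc (0 : ℝ) (1 / 2), 0 ≤ g r)
    (hbdd : ∃ M : ℝ, ∀ r ∈ Set.Ioc (1 / 4 : ℝ) (1 / 2), g r ≤ M)
    (hrec : ∀ ε ∈ Set.Ioc (0 : ℝ) (2 ^ (-(3 : ℝ) / 2)),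
      g ε ≤ Real.sqrt (g (ε * Real.sqrt 2) ^ 2 + b * g (ε * Real.sqrt 2)) + a) :
    ∃ K : ℝ, ∀ ε ∈ Set.Ioc (0 : ℝ) (1 / 2), g ε ≤ K * Real.log ε⁻¹ := by
  obtain ⟨M, hM⟩ := hbdd
  have hM0 : 0 ≤ M := le_trans (hg0 (1/2) (by norm_num)) (hM (1/2) (by norm_num))
  set C := a + b/2 with hC
  have hC0 : 0 ≤ C := by positivity
  have hs2 : (0:ℝ) < Real.sqrt 2 := Real.sqrt_pos.mpr (by norm_num)
  have hsq : Real.sqrt 2 ^ 2 = 2 := Real.sq_sqrt (by norm_num)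
  have hs2le : Real.sqrt 2 ≤ 2 := by nlinarith
  have h1s : 1 ≤ Real.sqrt 2 := by nlinarith
  have hlog2 : 0 < Real.log 2 := Real.log_pos (by norm_num)
  -- key value of 2 ^ (-3/2)
  have key : (1/4 : ℝ) ≤ (2:ℝ) ^ (-(3:ℝ)/2) := by
    have h1 : (2:ℝ) ^ (-(3:ℝ)/2) = ((2:ℝ) ^ ((3:ℝ)/2))⁻¹ := by
      rw [← Real.rpow_neg (by norm_num)]; norm_num
    have h2 : (2:ℝ) ^ ((3:ℝ)/2) = 2 * Real.sqrt 2 := by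
      rw [show ((3:ℝ)/2) = 1 + 1/2 by norm_num, Real.rpow_add (by norm_num),
        Real.rpow_one, ← Real.sqrt_eq_rpow]
    rw [h1, h2]
    rw [le_inv_comm₀ (by norm_num) (by positivity)]
    nlinarith
  -- one-step inequality
  have hstep : ∀ ε ∈ Set.Ioc (0:ℝ) (1/4), g ε ≤ g (ε * Real.sqrt 2) + C := by
    intro ε hε
    have hεs : ε * Real.sqrt 2 ∈ Set.Ioc (0:ℝ) (1/2) := by
      refine ⟨mul_pos hε.1 hs2, ?_⟩
      nlinarith [hε.2]
    have hx0 : 0 ≤ g (ε * Real.sqrt 2) := hg0 _ hεs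
    have h := hrec ε ⟨hε.1, le_trans hε.2 key⟩
    set x := g (ε * Real.sqrt 2) with hx
    have hsqrt : Real.sqrt (x ^ 2 + b * x) ≤ x + b/2 := by
      rw [show x + b/2 = Real.sqrt ((x + b/2)^2) from (Real.sqrt_sq (by positivity)).symm]
      apply Real.sqrt_le_sqrt
      nlinarith
    simp only [hC]
    linarith
  -- main induction
  have main : ∀ n : ℕ, ∀ ε ∈ Set.Ioc (0:ℝ) (1/2),
      (1/4) * (Real.sqrt 2)⁻¹ ^ n < ε → g ε ≤ M + n * C := by
    intro n
    induction n with
    | zero =>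
      intro ε hε h
      simp only [pow_zero, mul_one, Nat.cast_zero, zero_mul, add_zero] at *
      exact hM ε ⟨h, hε.2⟩
    | succ n ih =>
      intro ε hε h
      by_cases hcase : (1/4) * (Real.sqrt 2)⁻¹ ^ n < ε
      · have := ih ε hε hcase
        push_cast
        nlinarith
      · push_neg at hcase
        have hpowle : (Real.sqrt 2)⁻¹ ^ n ≤ 1 :=
          pow_le_one₀ (by positivity) (inv_le_one_of_one_le₀ h1s)
        have hε4 : ε ≤ 1/4 := le_trans hcase (by nlinarith)
        have h1 : g ε ≤ g (ε * Real.sqrt 2) + C := hstep ε ⟨hε.1, hε4⟩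
        have hεs : ε * Real.sqrt 2 ∈ Set.Ioc (0:ℝ) (1/2) := by
          refine ⟨mul_pos hε.1 hs2, ?_⟩
          nlinarith
        have hlt : (1/4) * (Real.sqrt 2)⁻¹ ^ n < ε * Real.sqrt 2 := by
          have := mul_lt_mul_of_pos_right h hs2
          have hinv : (Real.sqrt 2)⁻¹ * Real.sqrt 2 = 1 := inv_mul_cancel₀ (ne_of_gt hs2)
          calc (1/4) * (Real.sqrt 2)⁻¹ ^ n
              = (1/4) * (Real.sqrt 2)⁻¹ ^ (n+1) * Real.sqrt 2 := by
                rw [pow_succ]; field_simp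
            _ < ε * Real.sqrt 2 := this
        have h2 := ih (ε * Real.sqrt 2) hεs hlt
        push_cast
        linarith
  -- choose K
  refine ⟨(M + 3 * C) / Real.log 2, ?_⟩
  intro ε hε
  set L := Real.log ε⁻¹ with hL
  have hLval : L = - Real.log ε := by rw [hL, Real.log_inv]
  have hεinv : (2:ℝ) ≤ ε⁻¹ := by
    rw [le_inv_comm₀ (by norm_num) hε.1]
    linarith [hε.2]
  have hLge : Real.log 2 ≤ L := Real.log_le_log (by norm_num) hεinv
  have hLpos : 0 < L := lt_of_lt_of_le hlog2 hLge
  set n := Nat.ceil (2 * L / Real.log 2) with hn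
  have hn1 : 2 * L / Real.log 2 ≤ (n:ℝ) := Nat.le_ceil _
  have hn2 : (n:ℝ) < 2 * L / Real.log 2 + 1 :=
    Nat.ceil_lt_add_one (by positivity)
  have hn1' : 2 * L ≤ (n:ℝ) * Real.log 2 := by
    rw [div_le_iff₀ hlog2] at hn1; linarith
  -- the hypothesis of `main` at `n`
  have hpow : (Real.sqrt 2)⁻¹ ^ n ≤ ε := by
    have hxpos : (0:ℝ) < (Real.sqrt 2)⁻¹ ^ n := by positivity
    have hlog : Real.log ((Real.sqrt 2)⁻¹ ^ n) ≤ Real.log ε := by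
      rw [Real.log_pow, Real.log_inv, Real.log_sqrt (by norm_num)]
      have : -Real.log ε ≤ (n:ℝ) * (Real.log 2 / 2) := by linarith
      linarith
    calc (Real.sqrt 2)⁻¹ ^ n = Real.exp (Real.log ((Real.sqrt 2)⁻¹ ^ n)) :=
          (Real.exp_log hxpos).symm
      _ ≤ Real.exp (Real.log ε) := Real.exp_le_exp.mpr hlog
      _ = ε := Real.exp_log hε.1
  have hlt : (1/4) * (Real.sqrt 2)⁻¹ ^ n < ε := by nlinarith [hε.1]
  have hmain := main n ε hε hlt
  -- bound n and conclude
  have hn3 : (n:ℝ) * Real.log 2 ≤ 3 * L := by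
    have := mul_le_mul_of_nonneg_right hn2.le hlog2.le
    rw [add_mul, div_mul_cancel₀ _ (ne_of_gt hlog2), one_mul] at this
    linarith
  rw [div_mul_eq_mul_div, le_div_iff₀ hlog2]
  have h4 : C * ((n:ℝ) * Real.log 2) ≤ C * (3 * L) := mul_le_mul_of_nonneg_left hn3 hC0
  have h5 : M * Real.log 2 ≤ M * L := mul_le_mul_of_nonneg_left hLge hM0
  nlinarith
end
end

section
/- Let t_p > 0, K ≥ 0, M ≥ 0. For each n ≥ 1 let G_n : [0, t_p] → [0, M] be measurable and let b_n : [0, t_p] → [−M, M] be measurable, and assume: (i) G_n(t) ≤ b_n(t_p − t) + K ∫_0^t G_n(s) ds for every n ≥ 1 and every t ∈ [0, t_p]; (ii) b_n(r) → 0 as n → ∞ for Lebesgue-almost every r ∈ [0, t_p]. Then for every t ∈ [0, t_p] such that b_n(t_p − t) → 0 as n → ∞, one has G_n(t) → 0 as n → ∞. -/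
open MeasureTheory Real Set Filter

noncomputable section

/-- the Gronwall-type iteration in the proof of Proposition 3.1.
If `G_n : [0,t_p] → [0,M]` satisfies `G_n(t) ≤ b_n(t_p - t) + K ∫_0^t G_n(s) ds`,
`|b_n| ≤ M`, and `b_n(r) → 0` for Lebesgue-a.e. `r ∈ [0,t_p]`, then `G_n(t) → 0` for every
`t ∈ [0,t_p]` at which also `b_n(t_p - t) → 0`. -/
theorem gronwall_iteration_convergence (tp K M : ℝ) (htp : 0 < tp) (hK : 0 ≤ K)
    (hM : 0 ≤ M) (G b : ℕ → ℝ → ℝ)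
    (hGmeas : ∀ n, Measurable (G n)) (hbmeas : ∀ n, Measurable (b n))
    (hGrange : ∀ n, ∀ t ∈ Set.Icc (0 : ℝ) tp, G n t ∈ Set.Icc (0 : ℝ) M)
    (hbrange : ∀ n, ∀ t ∈ Set.Icc (0 : ℝ) tp, |b n t| ≤ M)
    (hineq : ∀ n, ∀ t ∈ Set.Icc (0 : ℝ) tp,
      G n t ≤ b n (tp - t) + K * ∫ s in (0 : ℝ)..t, G n s)
    (hbconv : ∀ᵐ r ∂(volume.restrict (Set.Icc (0 : ℝ) tp)),
      Filter.Tendsto (fun n => b n r) Filter.atTop (nhds 0)) :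
    ∀ t ∈ Set.Icc (0 : ℝ) tp,
      Filter.Tendsto (fun n => b n (tp - t)) Filter.atTop (nhds 0) →
      Filter.Tendsto (fun n => G n t) Filter.atTop (nhds 0) := by
  intro t ht hbt
  obtain ⟨ht0, http⟩ := ht
  -- `g n` is `G n` cut off outside `[0, tp]`; globally integrable.
  set g : ℕ → ℝ → ℝ := fun n => (Set.Icc (0 : ℝ) tp).indicator (G n) with hgdef
  have hg_eq : ∀ n, ∀ s ∈ Set.Icc (0 : ℝ) tp, g n s = G n s := fun n s hs =>
    Set.indicator_of_mem hs _
  have hg_nonneg : ∀ n s, 0 ≤ g n s := by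
    intro n s
    by_cases hs : s ∈ Set.Icc (0 : ℝ) tp
    · rw [hg_eq n s hs]; exact (hGrange n s hs).1
    · simp [hgdef, Set.indicator_of_notMem hs]
  have hg_le : ∀ n s, g n s ≤ M := by
    intro n s
    by_cases hs : s ∈ Set.Icc (0 : ℝ) tp
    · rw [hg_eq n s hs]; exact (hGrange n s hs).2
    · simpa [hgdef, Set.indicator_of_notMem hs] using hM
  have hg_meas : ∀ n, Measurable (g n) := fun n => (hGmeas n).indicator measurableSet_Icc
  have hGOn : ∀ n, IntegrableOn (G n) (Set.Icc (0 : ℝ) tp) := by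
    intro n
    refine Integrable.mono' (integrable_const M) (hGmeas n).aestronglyMeasurable ?_
    rw [ae_restrict_iff' measurableSet_Icc]
    refine Eventually.of_forall fun s hs => ?_
    rw [Real.norm_eq_abs, abs_of_nonneg (hGrange n s hs).1]
    exact (hGrange n s hs).2
  have hg_int : ∀ n, Integrable (g n) := fun n =>
    (integrable_indicator_iff measurableSet_Icc).mpr (hGOn n)
  -- the primitive `I n`
  set I : ℕ → ℝ → ℝ := fun n s => ∫ u in (0 : ℝ)..s, g n u with hIdef
  have hI_cont : ∀ n, Continuous (I n) := fun n => (hg_int n).continuous_primitive 0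
  have hI_nonneg : ∀ n, ∀ s, 0 ≤ s → 0 ≤ I n s := fun n s hs =>
    intervalIntegral.integral_nonneg hs fun u _ => hg_nonneg n u
  -- on `[0,tp]`, `I n` coincides with the primitive of `G n`
  have hI_eqG : ∀ n, ∀ s ∈ Set.Icc (0 : ℝ) tp, (∫ u in (0 : ℝ)..s, G n u) = I n s := by
    intro n s hs
    refine (intervalIntegral.integral_congr fun u hu => (hg_eq n u ?_).symm)
    rw [Set.uIcc_of_le hs.1] at hu
    exact ⟨hu.1, hu.2.trans hs.2⟩
  -- the inequality in terms of `g` and `I`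
  have hineq' : ∀ n, ∀ s ∈ Set.Icc (0 : ℝ) tp, g n s ≤ b n (tp - s) + K * I n s := by
    intro n s hs
    rw [hg_eq n s hs, ← hI_eqG n s hs]
    exact hineq n s hs
  -- `B n = ∫_0^tp |b n|` and its convergence to `0`
  set B : ℕ → ℝ := fun n => ∫ r in (0 : ℝ)..tp, |b n r| with hBdef
  have hb_absint : ∀ n, IntervalIntegrable (fun r => |b n r|) volume 0 tp := by
    intro n
    rw [intervalIntegrable_iff_integrableOn_Ioc_of_le htp.le]
    refine Integrable.mono' (integrable_const M) (hbmeas n).abs.aestronglyMeasurable ?_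
    rw [ae_restrict_iff' measurableSet_Ioc]
    refine Eventually.of_forall fun r hr => ?_
    rw [Real.norm_eq_abs, abs_abs]
    exact hbrange n r ⟨hr.1.le, hr.2⟩
  have hB_nonneg : ∀ n, 0 ≤ B n := fun n =>
    intervalIntegral.integral_nonneg htp.le fun r _ => abs_nonneg _
  have hB_tendsto : Tendsto B atTop (nhds 0) := by
    have h0 : (0 : ℝ) = ∫ r in Set.Ioc (0 : ℝ) tp, (0 : ℝ) := by simp
    have key : Tendsto (fun n => ∫ r in Set.Ioc (0 : ℝ) tp, |b n r|) atTop
        (nhds (∫ r in Set.Ioc (0 : ℝ) tp, (0 : ℝ))) := by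
      refine tendsto_integral_of_dominated_convergence (fun _ => M)
        (fun n => (hbmeas n).abs.aestronglyMeasurable) (integrable_const M) ?_ ?_
      · intro n
        rw [ae_restrict_iff' measurableSet_Ioc]
        refine Eventually.of_forall fun r hr => ?_
        rw [Real.norm_eq_abs, abs_abs]
        exact hbrange n r ⟨hr.1.le, hr.2⟩
      · have := ae_mono (Measure.restrict_mono Set.Ioc_subset_Icc_self le_rfl) hbconv
        filter_upwards [this] with r hr
        simpa using hr.abs
    simp only [integral_zero] at key
    have : B = fun n => ∫ r in Set.Ioc (0 : ℝ) tp, |b n r| := by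
      funext n
      simp [hBdef, intervalIntegral.integral_of_le htp.le]
    rw [this]
    exact key
  -- interval integrability facts
  have hb_comp_int : ∀ n, ∀ s ∈ Set.Icc (0 : ℝ) tp,
      IntervalIntegrable (fun u => b n (tp - u)) volume 0 s := by
    intro n s hs
    rw [intervalIntegrable_iff_integrableOn_Ioc_of_le hs.1]
    refine Integrable.mono' (integrable_const M)
      ((hbmeas n).comp (measurable_const.sub measurable_id)).aestronglyMeasurable ?_
    rw [ae_restrict_iff' measurableSet_Ioc]
    refine Eventually.of_forall fun u hu => ?_
    rw [Real.norm_eq_abs]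
    exact hbrange n (tp - u) ⟨by linarith [hu.2, hs.2], by linarith [hu.1]⟩
  -- `∫_0^s b n (tp - u) du ≤ B n` for `s ∈ [0, tp]`
  have hb_int_le : ∀ n, ∀ s ∈ Set.Icc (0 : ℝ) tp,
      (∫ u in (0 : ℝ)..s, b n (tp - u)) ≤ B n := by
    intro n s hs
    have h1 : (∫ u in (0 : ℝ)..s, b n (tp - u)) ≤ ∫ u in (0 : ℝ)..s, |b n (tp - u)| :=
      intervalIntegral.integral_mono_on hs.1 (hb_comp_int n s hs)
        (hb_comp_int n s hs).abs (fun u _ => le_abs_self _)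
    have h2 : (∫ u in (0 : ℝ)..s, |b n (tp - u)|)
        = ∫ r in (tp - s)..(tp - 0), |b n r| :=
      intervalIntegral.integral_comp_sub_left (fun r => |b n r|) tp
    have h3 : (∫ r in (tp - s)..(tp - 0), |b n r|) ≤ B n := by
      rw [sub_zero]
      refine intervalIntegral.integral_mono_interval (by linarith [hs.2]) (by linarith [hs.1])
        le_rfl ?_ (hb_absint n)
      exact Eventually.of_forall fun r => abs_nonneg _
    calc (∫ u in (0 : ℝ)..s, b n (tp - u)) ≤ _ := h1
      _ = _ := h2
      _ ≤ B n := h3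
  -- integral form of the inequality: `I n s ≤ B n + K * J n s`
  set J : ℕ → ℝ → ℝ := fun n s => ∫ u in (0 : ℝ)..s, I n u with hJdef
  have hI_le : ∀ n, ∀ s ∈ Set.Icc (0 : ℝ) tp, I n s ≤ B n + K * J n s := by
    intro n s hs
    have hIint : IntervalIntegrable (fun u => K * I n u) volume 0 s :=
      ((continuous_const.mul (hI_cont n)).intervalIntegrable 0 s)
    have hsum : IntervalIntegrable (fun u => b n (tp - u) + K * I n u) volume 0 s :=
      (hb_comp_int n s hs).add hIint
    have hgint : IntervalIntegrable (g n) volume 0 s := (hg_int n).intervalIntegrable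
    have hmono : I n s ≤ ∫ u in (0 : ℝ)..s, (b n (tp - u) + K * I n u) := by
      refine intervalIntegral.integral_mono_on hs.1 hgint hsum fun u hu => ?_
      exact hineq' n u ⟨hu.1, hu.2.trans hs.2⟩
    rw [intervalIntegral.integral_add (hb_comp_int n s hs) hIint,
      intervalIntegral.integral_const_mul] at hmono
    exact hmono.trans (by
      have := hb_int_le n s hs
      simp only [hJdef]
      linarith)
  -- `J n` is differentiable with derivative `I n`
  have hJ_deriv : ∀ n s, HasDerivAt (J n) (I n s) s := by
    intro n s
    exact intervalIntegral.integral_hasDerivAt_right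
      ((hI_cont n).intervalIntegrable 0 s)
      ((hI_cont n).stronglyMeasurable.stronglyMeasurableAtFilter)
      (hI_cont n).continuousAt
  have hJ_nonneg : ∀ n, ∀ s, 0 ≤ s → 0 ≤ J n s := fun n s hs =>
    intervalIntegral.integral_nonneg hs fun u hu => hI_nonneg n u hu.1
  -- Grönwall
  have hgron : ∀ n, ∀ s ∈ Set.Icc (0 : ℝ) tp, J n s ≤ gronwallBound 0 K (B n) s := by
    intro n s hs
    have := norm_le_gronwallBound_of_norm_deriv_right_le (f := J n) (f' := I n)
      (δ := 0) (K := K) (ε := B n) (a := 0) (b := tp)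
      ((continuous_iff_continuousAt.mpr fun x => (hJ_deriv n x).continuousAt).continuousOn)
      (fun x _ => (hJ_deriv n x).hasDerivWithinAt)
      (by simp [hJdef])
      (fun x hx => by
        rw [Real.norm_eq_abs, Real.norm_eq_abs, abs_of_nonneg (hI_nonneg n x hx.1),
          abs_of_nonneg (hJ_nonneg n x hx.1)]
        linarith [hI_le n x ⟨hx.1, hx.2.le⟩]) s hs
    rw [Real.norm_eq_abs, abs_of_nonneg (hJ_nonneg n s hs.1), sub_zero] at this
    exact this
  -- a uniform bound for the Grönwall bound, linear in `B n`
  set D : ℝ := if K = 0 then tp else (Real.exp (K * tp) - 1) / K with hDdef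
  have hgronD : ∀ n, ∀ s ∈ Set.Icc (0 : ℝ) tp, gronwallBound 0 K (B n) s ≤ B n * D := by
    intro n s hs
    rcases eq_or_ne K 0 with hK0 | hK0
    · rw [hK0, gronwallBound_K0]
      simp only [hDdef, if_pos hK0]
      have := mul_le_mul_of_nonneg_left hs.2 (hB_nonneg n)
      linarith
    · have hKpos : 0 < K := lt_of_le_of_ne hK (Ne.symm hK0)
      rw [gronwallBound_of_K_ne_0 hK0]
      simp only [hDdef, if_neg hK0, zero_mul, zero_add]
      rw [div_mul_eq_mul_div, mul_comm (B n) ((Real.exp (K * tp) - 1) / K),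
        div_mul_eq_mul_div]
      rw [div_le_div_iff_of_pos_right hKpos]
      have hexp : Real.exp (K * s) ≤ Real.exp (K * tp) :=
        Real.exp_le_exp.mpr (mul_le_mul_of_nonneg_left hs.2 hK)
      have h1 : Real.exp (K * s) - 1 ≤ Real.exp (K * tp) - 1 := by linarith
      have h2 : (0:ℝ) ≤ Real.exp (K * s) - 1 := by
        have : (1:ℝ) ≤ Real.exp (K * s) :=
          Real.one_le_exp (mul_nonneg hK hs.1)
        linarith
      calc B n * (Real.exp (K * s) - 1) ≤ B n * (Real.exp (K * tp) - 1) :=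
            mul_le_mul_of_nonneg_left h1 (hB_nonneg n)
        _ = (Real.exp (K * tp) - 1) * B n := mul_comm _ _
  -- final squeeze
  have hupper : ∀ n, G n t ≤ b n (tp - t) + (K + K * K * D) * B n := by
    intro n
    have h1 : G n t ≤ b n (tp - t) + K * I n t := by
      rw [← hg_eq n t ⟨ht0, http⟩]; exact hineq' n t ⟨ht0, http⟩
    have h2 : I n t ≤ B n + K * (B n * D) := by
      have := hI_le n t ⟨ht0, http⟩
      have h3 := (hgron n t ⟨ht0, http⟩).trans (hgronD n t ⟨ht0, http⟩)
      nlinarith [hK]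
    nlinarith [hK]
  have hlower : ∀ n, (0 : ℝ) ≤ G n t := fun n => (hGrange n t ⟨ht0, http⟩).1
  have htend : Tendsto (fun n => b n (tp - t) + (K + K * K * D) * B n) atTop (nhds 0) := by
    have := hbt.add (hB_tendsto.const_mul (K + K * K * D))
    simpa using this
  exact tendsto_of_tendsto_of_tendsto_of_le_of_le tendsto_const_nhds htend hlower hupper
end
end
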